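/- Define f(s, w, q) = Σ_{j=0}^{s} (-1)^j C(w-1, j) q^{-j}. If 0 ≤ s, w ≤ q+1, and either s ≠ 1 or w < q+1, then f(s, w, q) > 0. (For s = 1 and w = q+1, f(1, q+1, q) = 0.) -/

import Mathlib

open Finset

lemma mds_aux (w q j : ℕ) (hw : 1 ≤ w) (hwq : w ≤ q + 1) (hj : 1 ≤ j) :
    2 * (w - 1).choose (j + 1) ≤ q * (w - 1).choose j := by
  rcases Nat.lt_or_ge (w - 1) (j + 1) with h | h
  · rw [Nat.choose_eq_zero_of_lt h]; exact Nat.zero_le _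
  · calc 2 * (w - 1).choose (j + 1) ≤ (j + 1) * (w - 1).choose (j + 1) :=
          Nat.mul_le_mul_right _ (by omega)
      _ = (w - 1).choose j * (w - 1 - j) := by
          rw [mul_comm]; exact Nat.choose_succ_right_eq _ _
      _ ≤ (w - 1).choose j * q := Nat.mul_le_mul_left _ (by omega)
      _ = q * (w - 1).choose j := mul_comm _ _

/-- With `f(s,w,q) = Σ_{j=0}^{s} (-1)^j C(w-1,j) q^{-j}`: if `w ≤ q+1` and
either `s ≠ 1` or `w < q+1`, then `f(s,w,q) > 0`; and `f(1,q+1,q) = 0`. -/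
theorem mds_f_positive (s w q : ℕ) (hw : 1 ≤ w) (hq : 2 ≤ q) (hwq : w ≤ q + 1) :
    let f : ℕ → ℕ → ℚ := fun s w =>
      ∑ j ∈ Finset.range (s + 1), (-1) ^ j * ((w - 1).choose j : ℚ) * ((q : ℚ) ^ j)⁻¹
    ((s ≠ 1 ∨ w < q + 1) → 0 < f s w) ∧ f 1 (q + 1) = 0 := by
  intro f
  have hq0 : (0:ℚ) < q := by exact_mod_cast (by omega : 0 < q)
  set a : ℕ → ℚ := fun j => ((w - 1).choose j : ℚ) * ((q : ℚ) ^ j)⁻¹ with ha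
  have hf : ∀ n, f n w = ∑ j ∈ Finset.range (n + 1), (-1) ^ j * a j := by
    intro n
    simp only [f, a]
    exact Finset.sum_congr rfl (fun j _ => by ring)
  have hsucc : ∀ n, f (n + 1) w = f n w + (-1) ^ (n + 1) * a (n + 1) := by
    intro n; rw [hf, hf, Finset.sum_range_succ]
  have hapos : ∀ j, 0 ≤ a j := by
    intro j; simp only [a]; positivity
  have hdec : ∀ j, 1 ≤ j → 2 * a (j + 1) ≤ a j := by
    intro j hj
    have hnat := mds_aux w q j hw hwq hj
    have hcast : ((2 * (w - 1).choose (j + 1) : ℕ) : ℚ)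
        ≤ ((q * (w - 1).choose j : ℕ) : ℚ) := Nat.cast_le.2 hnat
    push_cast at hcast
    have hqj1 : (0:ℚ) < (q:ℚ) ^ (j + 1) := by positivity
    calc 2 * a (j + 1) = (2 * ((w - 1).choose (j + 1) : ℚ)) * ((q:ℚ) ^ (j + 1))⁻¹ := by
          simp only [a]; ring
      _ ≤ ((q:ℚ) * ((w - 1).choose j : ℚ)) * ((q:ℚ) ^ (j + 1))⁻¹ :=
          mul_le_mul_of_nonneg_right hcast (le_of_lt (inv_pos.2 hqj1))
      _ = a j := by
          simp only [a]
          rw [pow_succ]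
          field_simp
  have hf0 : f 0 w = 1 := by
    rw [hf]
    simp [ha]
  have hf1 : f 1 w = 1 - ((w - 1 : ℕ) : ℚ) * (q:ℚ)⁻¹ := by
    rw [hsucc, hf0]
    simp only [ha, pow_one]
    rw [Nat.choose_one_right]
    ring
  have hf1pos : w < q + 1 → 0 < f 1 w := by
    intro h
    rw [hf1]
    have hx : ((w - 1 : ℕ) : ℚ) < q := by exact_mod_cast (by omega : w - 1 < q)
    have : ((w - 1 : ℕ) : ℚ) * (q:ℚ)⁻¹ < 1 := by
      rw [← div_eq_mul_inv]
      exact (div_lt_one hq0).2 hx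
    linarith
  have ha2 : 0 < f 1 w + a 2 / 2 := by
    rcases eq_or_lt_of_le hwq with h | h
    · have hw1 : w - 1 = q := by omega
      have hz : f 1 w = 0 := by
        rw [hf1, hw1]
        field_simp
        norm_num
      have hc : 0 < ((w - 1).choose 2 : ℚ) := by
        exact_mod_cast Nat.choose_pos (by omega : 2 ≤ w - 1)
      have : 0 < a 2 := by
        simp only [a]
        exact mul_pos hc (inv_pos.2 (by positivity))
      linarith
    · have := hf1pos h
      linarith [hapos 2]
  have hf3 : 0 < f 3 w := by
    have e : f 3 w = f 1 w + a 2 - a 3 := by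
      rw [hsucc 2, hsucc 1]
      norm_num
      ring
    have := hdec 2 (by omega)
    linarith
  have hodd : ∀ k, 0 < f (2 * k + 3) w := by
    intro k
    induction k with
    | zero => simpa using hf3
    | succ n ih =>
      have e1 := hsucc (2 * n + 3)
      have e2 := hsucc (2 * n + 4)
      have p1 : ((-1 : ℚ)) ^ (2 * n + 3 + 1) = 1 := Even.neg_one_pow ⟨n + 2, by ring⟩
      have p2 : ((-1 : ℚ)) ^ (2 * n + 4 + 1) = -1 := Odd.neg_one_pow ⟨n + 2, by ring⟩
      rw [p1] at e1
      rw [p2] at e2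
      have hidx : 2 * (n + 1) + 3 = 2 * n + 4 + 1 := by ring
      rw [hidx]
      have := hdec (2 * n + 4) (by omega)
      have := hapos (2 * n + 5)
      have h45 : a (2 * n + 4 + 1) ≤ a (2 * n + 4) := by
        have := hdec (2 * n + 4) (by omega)
        have := hapos (2 * n + 4 + 1)
        linarith
      linarith
  constructor
  · intro hs
    rcases Nat.lt_or_ge s 2 with h2 | h2
    · interval_cases s
      · rw [hf0]; norm_num
      · exact hf1pos (by tauto)
    · rcases Nat.even_or_odd s with he | ho
      · obtain ⟨k, hk⟩ : ∃ k, s + 1 = 2 * k + 3 := by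
          obtain ⟨m, hm⟩ := he; exact ⟨(s - 2) / 2, by omega⟩
        have e := hsucc s
        have p : ((-1 : ℚ)) ^ (s + 1) = -1 := by
          obtain ⟨m, hm⟩ := he
          exact Odd.neg_one_pow ⟨m, by omega⟩
        rw [p] at e
        have := hodd k
        rw [← hk] at this
        have := hapos (s + 1)
        linarith
      · obtain ⟨k, hk⟩ : ∃ k, s = 2 * k + 3 := by
          obtain ⟨m, hm⟩ := ho; exact ⟨(s - 3) / 2, by omega⟩
        rw [hk]; exact hodd k
  · simp only [f]
    rw [Finset.sum_range_succ, Finset.sum_range_succ, Finset.sum_range_zero]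
    simp [Nat.add_sub_cancel, Nat.choose_one_right]
    field_simp
    norm_num
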